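/- Fix t with 0 < t < 1. The function r ↦ (1+t)^r/(1 − t^r) is nondecreasing on [2, ∞); that is, for all real numbers r_1, r_2 with 2 ≤ r_1 ≤ r_2 one has (1+t)^{r_1}/(1 − t^{r_1}) ≤ (1+t)^{r_2}/(1 − t^{r_2}). -/

import Mathlib

theorem stmt_12 (t : ℝ) (ht0 : 0 < t) (ht1 : t < 1) :
    MonotoneOn (fun r : ℝ => (1 + t) ^ r / (1 - t ^ r)) (Set.Ici (2 : ℝ)) := by
  intro r1 hr1 r2 hr2 h12
  simp only [Set.mem_Ici] at hr1 hr2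
  have hapos : (0:ℝ) < 1 + t := by linarith
  set s := r2 - r1 with hsdef
  have hs0 : 0 ≤ s := by simp [hsdef]; linarith
  have hu1 : t ^ r1 < 1 := Real.rpow_lt_one ht0.le ht1 (by linarith)
  have hu2 : t ^ r2 < 1 := Real.rpow_lt_one ht0.le ht1 (by linarith)
  have hupos : 0 < t ^ r1 := Real.rpow_pos_of_pos ht0 _
  have hut2 : t ^ r1 ≤ t ^ 2 := by
    have := Real.rpow_le_rpow_of_exponent_ge ht0 ht1.le hr1
    simpa using this
  set L := Real.log (1 + t) with hLdef
  set M := -Real.log t with hMdef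
  have hL0 : 0 ≤ L := Real.log_nonneg (by linarith)
  have hM0 : 0 ≤ M := by
    have : Real.log t ≤ 0 := Real.log_nonpos ht0.le ht1.le
    simp [hMdef]; linarith
  -- log(1+t) ≥ t/(1+t):  from log(1/(1+t)) ≤ 1/(1+t) - 1
  have hL1 : t ≤ (1 + t) * L := by
    have h := Real.log_le_sub_one_of_pos (show (0:ℝ) < 1/(1+t) by positivity)
    rw [Real.log_div one_ne_zero (by linarith), Real.log_one] at h
    have h2 : -L ≤ 1/(1+t) - 1 := by simpa [hLdef] using h
    have h3 : (1/(1+t) - 1) * (1+t) = -t := by field_simp; ring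
    nlinarith [h2, hapos]
  -- -log t ≤ 1/t - 1, i.e. t*M ≤ 1 - t
  have hM1 : t * M ≤ 1 - t := by
    have h := Real.log_le_sub_one_of_pos (show (0:ℝ) < 1/t by positivity)
    rw [Real.log_div one_ne_zero (ne_of_gt ht0), Real.log_one] at h
    have h2 : M ≤ 1/t - 1 := by simpa [hMdef] using h
    have h3 : (1/t - 1) * t = 1 - t := by field_simp
    nlinarith [h2, ht0]
  -- key scalar inequality: u * M ≤ L * (1 - u) for u = t^r1
  have keyu : (t ^ r1) * M ≤ L * (1 - t ^ r1) := by
    have k1 : t * (1 - t) ≤ L * (1 - t^2) := by nlinarith [hL1, ht1, ht0]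
    have k2 : t^2 * M ≤ t * (1 - t) := by nlinarith [hM1, ht0]
    have k3 : (t ^ r1) * M ≤ t^2 * M := by
      have : (t:ℝ)^(2:ℕ) = t ^ ((2:ℕ):ℝ) := (Real.rpow_natCast t 2).symm
      nlinarith [hut2, hM0]
    have k4 : L * (1 - t^2) ≤ L * (1 - t ^ r1) := by nlinarith [hut2, hL0]
    linarith
  -- exponential bounds
  have hB1 : 1 + s * L ≤ (1 + t) ^ s := by
    rw [Real.rpow_def_of_pos hapos]
    have := Real.add_one_le_exp (Real.log (1 + t) * s)
    linarith [this]
  have hB2 : 1 - s * M ≤ t ^ s := by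
    rw [Real.rpow_def_of_pos ht0]
    have := Real.add_one_le_exp (Real.log t * s)
    have hM : Real.log t * s = -(s * M) := by simp [hMdef]; ring
    linarith [this]
  have htspos : 0 < t ^ s := Real.rpow_pos_of_pos ht0 _
  -- main inequality: 1 - u * t^s ≤ (1+t)^s * (1 - u)
  have main : 1 - t ^ r1 * t ^ s ≤ (1 + t) ^ s * (1 - t ^ r1) := by
    have h1 : s * ((t ^ r1) * M) ≤ s * (L * (1 - t ^ r1)) :=
      mul_le_mul_of_nonneg_left keyu hs0
    have h2 : t ^ r1 * (1 - t ^ s) ≤ t ^ r1 * (s * M) :=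
      mul_le_mul_of_nonneg_left (by linarith [hB2]) hupos.le
    have h3 : (1 + s * L) * (1 - t ^ r1) ≤ (1 + t) ^ s * (1 - t ^ r1) :=
      mul_le_mul_of_nonneg_right hB1 (by linarith)
    nlinarith [h1, h2, h3]
  -- finish
  have hApos : 0 < (1 + t) ^ r1 := Real.rpow_pos_of_pos hapos _
  simp only
  rw [div_le_div_iff₀ (by linarith) (by linarith)]
  have hr2eq : r2 = r1 + s := by simp [hsdef]
  rw [hr2eq, Real.rpow_add hapos, Real.rpow_add ht0]
  rw [mul_assoc]
  have := mul_le_mul_of_nonneg_left main hApos.le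
  linarith [this]
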